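/- For every type A with decidable equality and every 'list of chains' T ∈ C_A, there exist a strict (irreflexive and transitive) order < on A and a set E : Set A such that SCh(E) = ⟨T⟩. -/

import Mathlib

namespace Paper

universe u v

/-- `listSub u α` : every element of the list `u` belongs to `α` (written `u ⊂ α`). -/
def listSub {A : Type u} (u : List A) (α : Set A) : Prop := ∀ a ∈ u, a ∈ α

/-- `⟨T⟩` : the sets all of whose finite sublists are in `T`. -/
def eng {A : Type u} (T : Set (List A)) : Set (Set A) :=
  {α | ∀ l : List A, listSub l α → l ∈ T}

/-- `⟨T⟩∃` : the sets having some finite sublist in `T`. -/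
def engE {A : Type u} (T : Set (List A)) : Set (Set A) :=
  {α | ∃ l : List A, listSub l α ∧ l ∈ T}

/-- `û` : the set of elements of the list `u`. -/
def hat {A : Type u} (l : List A) : Set A := {a | a ∈ l}

/-- `⌊P⌋` : the lists whose set of elements is in `P`. -/
def res {A : Type u} (P : Set (Set A)) : Set (List A) := {l | hat l ∈ P}

/-- `F` is a subchain of `E` with respect to the strict order `lt`. -/
def Subchain {X : Type u} (lt : X → X → Prop) (E F : Set X) : Prop :=
  F ⊆ E ∧ ∀ a ∈ F, ∀ b ∈ F, lt a b ∨ lt b a ∨ a = b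

/-- `SCh E` : the set of subchains of `E`. -/
def SCh {X : Type u} (lt : X → X → Prop) (E : Set X) : Set (Set X) :=
  {F | Subchain lt E F}

/-- `E` is inductive: every subchain has an upper bound in `E` for the
reflexive closure of `lt`. -/
def IsInductive {X : Type u} (lt : X → X → Prop) (E : Set X) : Prop :=
  ∀ F : Set X, Subchain lt E F → ∃ a ∈ E, ∀ b ∈ F, b = a ∨ lt b a

/-- `a` is `lt`-maximal in `E`. -/
def MaxLt {X : Type u} (lt : X → X → Prop) (E : Set X) (a : X) : Prop :=
  a ∈ E ∧ ∀ b, lt a b → b ∉ E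

/-- Zorn's lemma for the strict order `lt` and the set `E`. -/
def Zorn {X : Type u} (lt : X → X → Prop) (E : Set X) : Prop :=
  IsInductive lt E → ∃ a, MaxLt lt E a

/-- `T` is a 'list of chains' (`T ∈ C_A`). -/
def IsListOfChains {A : Type u} (T : Set (List A)) : Prop :=
  ∃ T' : Set (List A),
    [] ∈ T' ∧
    (∀ (l v : List A) (a : A), (l ++ [a] ∈ T' ∧ [a] ++ v ∈ T') ↔ l ++ [a] ++ v ∈ T') ∧
    (∀ (l v : List A) (a : A), l ++ [a] ++ v ∈ T' → l ++ v ∈ T') ∧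
    (∀ (a b : A) (l v w : List A), a ≠ b → l ++ [a] ++ v ++ [b] ++ w ∈ T' →
      ∀ l' v' w' : List A, l' ++ [b] ++ v' ++ [a] ++ w' ∉ T') ∧
    T = {l | ∃ v ∈ T', ∀ a ∈ l, a ∈ v}

section Aux
open List
variable {A : Type u}

/-- Bundled hypotheses on `T'`. -/
structure Good (T' : Set (List A)) : Prop where
  nil : [] ∈ T'
  split : ∀ (l v : List A) (a : A), (l ++ [a] ∈ T' ∧ [a] ++ v ∈ T') ↔ l ++ [a] ++ v ∈ T'
  del : ∀ (l v : List A) (a : A), l ++ [a] ++ v ∈ T' → l ++ v ∈ T'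
  swap : ∀ (a b : A) (l v w : List A), a ≠ b → l ++ [a] ++ v ++ [b] ++ w ∈ T' →
      ∀ l' v' w' : List A, l' ++ [b] ++ v' ++ [a] ++ w' ∉ T'

/-- The strict order extracted from `T'`. -/
def slt (T' : Set (List A)) (a b : A) : Prop :=
  a ≠ b ∧ ∃ l v w, l ++ [a] ++ v ++ [b] ++ w ∈ T'

theorem Good.sub_del {T' : Set (List A)} (hG : Good T') :
    ∀ {u v : List A}, u <+ v → ∀ p, p ++ v ∈ T' → p ++ u ∈ T' := by
  intro u v h
  induction h with
  | slnil => exact fun p hp => hp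
  | cons a h ih =>
    intro p hp
    exact ih p (hG.del p _ a (by simpa using hp))
  | cons_cons a h ih =>
    intro p hp
    have := ih (p ++ [a]) (by simpa using hp)
    simpa using this

theorem Good.mem_sub {T' : Set (List A)} (hG : Good T') {u v : List A}
    (h : u <+ v) (hv : v ∈ T') : u ∈ T' := by
  simpa using hG.sub_del h [] (by simpa using hv)

theorem Good.lt_pair {T' : Set (List A)} (hG : Good T') {a b : A}
    (h : slt T' a b) : [a, b] ∈ T' := by
  obtain ⟨hne, l, v, w, hw⟩ := h
  have has : [a] <+ l ++ [a] := List.sublist_append_right l [a]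
  have hbs : [b] <+ v ++ ([b] ++ w) :=
    (List.sublist_append_left [b] w).trans (List.sublist_append_right v ([b] ++ w))
  have := has.append hbs
  exact hG.mem_sub (by simpa [List.append_assoc] using this) hw

theorem Good.pair_lt {T' : Set (List A)} (hG : Good T') {a b : A}
    (hne : a ≠ b) (h : [a, b] ∈ T') : slt T' a b :=
  ⟨hne, [], [], [], by simpa using h⟩

theorem Good.irrefl {T' : Set (List A)} (hG : Good T') : Irreflexive (slt T') :=
  fun _ h => h.1 rfl

theorem Good.trans {T' : Set (List A)} (hG : Good T') : Transitive (slt T') := by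
  intro a b c hab hbc
  have pab : [a, b] ∈ T' := hG.lt_pair hab
  have pbc : [b, c] ∈ T' := hG.lt_pair hbc
  have hac : a ≠ c := by
    rintro rfl
    exact hG.swap a b [] [] [] hab.1 (by simpa using pab) [] [] [] (by simpa using pbc)
  have habc : [a] ++ [b] ++ [c] ∈ T' :=
    (hG.split [a] [c] b).mp ⟨by simpa using pab, by simpa using pbc⟩
  have pac : [a, c] ∈ T' := by simpa using hG.del [a] [c] b (by simpa using habc)
  exact hG.pair_lt hac pac

theorem Good.snocT {T' : Set (List A)} (hG : Good T') {a : A} (ha : [a] ∈ T')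
    (p : List A) (hp : p ∈ T') (hpa : ∀ b ∈ p, slt T' b a) : p ++ [a] ∈ T' := by
  rcases List.eq_nil_or_concat p with rfl | ⟨p0, c, rfl⟩
  · simpa using ha
  · have hc : slt T' c a := hpa c (by simp)
    have h1 : [c] ++ [a] ∈ T' := by simpa using hG.lt_pair hc
    have := (hG.split p0 [a] c).mp ⟨by simpa [List.concat_eq_append] using hp, h1⟩
    simpa [List.append_assoc] using this

theorem Good.insChain {T' : Set (List A)} (hG : Good T') {a : A} (ha : [a] ∈ T') :
    ∀ (w p : List A), p ++ w ∈ T' →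
      (∀ b ∈ w, slt T' a b ∨ slt T' b a ∨ a = b) →
      (∀ b ∈ p, slt T' b a) →
      ∃ w', p ++ w' ∈ T' ∧ ∀ x, x ∈ w' ↔ (x = a ∨ x ∈ w) := by
  intro w
  induction w with
  | nil =>
    intro p hp _ hpa
    refine ⟨[a], ?_, by simp⟩
    exact hG.snocT ha p (by simpa using hp) hpa
  | cons b w2 ih =>
    intro p hp hcomp hpa
    rcases hcomp b (by simp) with hab | hba | heq
    · refine ⟨a :: b :: w2, ?_, by simp⟩
      have hpT : p ∈ T' := hG.mem_sub (List.sublist_append_left p (b :: w2)) hp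
      have hpa' : p ++ [a] ∈ T' := hG.snocT ha p hpT hpa
      have hbw : [b] ++ w2 ∈ T' := by
        have : b :: w2 <+ p ++ (b :: w2) := List.sublist_append_right p (b :: w2)
        simpa using hG.mem_sub this hp
      have h2' : [a] ++ (b :: w2) ∈ T' := by
        have := (hG.split [a] w2 b).mp ⟨by simpa using hG.lt_pair hab, hbw⟩
        simpa using this
      have := (hG.split p (b :: w2) a).mp ⟨hpa', h2'⟩
      simpa using this
    · obtain ⟨w'', hw'', hmem⟩ := ih (p ++ [b]) (by simpa using hp)
        (fun c hc => hcomp c (by simp [hc]))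
        (by
          intro c hc
          rcases List.mem_append.mp hc with h | h
          · exact hpa c h
          · simp at h; subst h; exact hba)
      refine ⟨b :: w'', by simpa using hw'', ?_⟩
      intro x
      have := hmem x
      simp only [List.mem_cons] at this ⊢
      tauto
    · refine ⟨b :: w2, hp, ?_⟩
      intro x
      subst heq
      simp only [List.mem_cons]
      tauto

theorem Good.buildChain {T' : Set (List A)} (hG : Good T') (F : Set A)
    (hFE : ∀ a ∈ F, [a] ∈ T')
    (hch : ∀ a ∈ F, ∀ b ∈ F, slt T' a b ∨ slt T' b a ∨ a = b) :
    ∀ l : List A, (∀ a ∈ l, a ∈ F) →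
      ∃ w ∈ T', (∀ a ∈ l, a ∈ w) ∧ ∀ a ∈ w, a ∈ F := by
  intro l
  induction l with
  | nil => exact fun _ => ⟨[], hG.nil, by simp, by simp⟩
  | cons a l ih =>
    intro hl
    obtain ⟨w, hwT, hlw, hwF⟩ := ih (fun b hb => hl b (by simp [hb]))
    have haF : a ∈ F := hl a (by simp)
    obtain ⟨w', hw', hmem⟩ := hG.insChain (hFE a haF) w [] (by simpa using hwT)
      (fun b hb => hch a haF b (hwF b hb)) (by simp)
    refine ⟨w', by simpa using hw', ?_, ?_⟩
    · intro c hc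
      rcases List.mem_cons.mp hc with rfl | hcl
      · exact (hmem c).mpr (Or.inl rfl)
      · exact (hmem c).mpr (Or.inr (hlw c hcl))
    · intro c hc
      rcases (hmem c).mp hc with rfl | h
      · exact haF
      · exact hwF c h

theorem pair_sublist_of_mem {a b : A} (hab : a ≠ b) :
    ∀ {v : List A}, a ∈ v → b ∈ v → [a, b] <+ v ∨ [b, a] <+ v := by
  intro v
  induction v with
  | nil => simp
  | cons c v ih =>
    intro ha hb
    by_cases hac : a = c
    · subst hac
      have hbv : b ∈ v := List.mem_of_ne_of_mem (Ne.symm hab) hb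
      exact Or.inl ((List.singleton_sublist.mpr hbv).cons₂ a)
    · by_cases hbc : b = c
      · subst hbc
        have hav : a ∈ v := List.mem_of_ne_of_mem hab ha
        exact Or.inr ((List.singleton_sublist.mpr hav).cons₂ b)
      · exact (ih (List.mem_of_ne_of_mem hac ha) (List.mem_of_ne_of_mem hbc hb)).imp
          (List.Sublist.cons c) (List.Sublist.cons c)

end Aux

/-- every list of chains `T ∈ C_A` arises as `SCh(E)` for some
strict order and some `E`. -/
theorem listOfChains_eq_SCh (A : Type u) [DecidableEq A]
    (T : Set (List A)) (hT : IsListOfChains T) :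
    ∃ (lt : A → A → Prop) (E : Set A),
      Irreflexive lt ∧ Transitive lt ∧ SCh lt E = eng T := by
  obtain ⟨T', h1, h2, h3, h4, hTeq⟩ := hT
  have hG : Good T' := ⟨h1, h2, h3, h4⟩
  refine ⟨slt T', {a | [a] ∈ T'}, hG.irrefl, hG.trans, ?_⟩
  ext α
  simp only [SCh, Set.mem_setOf_eq, eng, Subchain]
  constructor
  · rintro ⟨hsub, hch⟩ l hl
    obtain ⟨w, hwT, hlw, _⟩ := hG.buildChain α (fun a ha => hsub ha) hch l hl
    rw [hTeq]
    exact ⟨w, hwT, hlw⟩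
  · intro hα
    constructor
    · intro a ha
      have : [a] ∈ T := hα [a] (by intro b hb; simp at hb; subst hb; exact ha)
      rw [hTeq] at this
      obtain ⟨v, hv, hm⟩ := this
      exact hG.mem_sub (List.singleton_sublist.mpr (hm a (by simp))) hv
    · intro a ha b hb
      by_cases hab : a = b
      · exact Or.inr (Or.inr hab)
      · have : [a, b] ∈ T := by
          refine hα [a, b] ?_
          intro c hc
          rcases List.mem_cons.mp hc with rfl | hc
          · exact ha
          · simp at hc; subst hc; exact hb
        rw [hTeq] at this
        obtain ⟨v, hv, hm⟩ := this
        rcases pair_sublist_of_mem hab (hm a (by simp)) (hm b (by simp)) with h | h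
        · exact Or.inl (hG.pair_lt hab (hG.mem_sub h hv))
        · exact Or.inr (Or.inl (hG.pair_lt (Ne.symm hab) (hG.mem_sub h hv)))

end Paper
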